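/- arXiv:2308.07678 — 2 statements merged into one kernel-verified Lean document; each statement's English description precedes it below -/
import Mathlib

section
/- For 0 < κ ≤ 1, the function g_κ(x) = Φ(√(1/κ)(κ−1)x) + e^{2x²}·Φ(−√(1/κ)(κ+1)x) is strictly decreasing on (0,∞). -/
noncomputable def Phi (y : ℝ) : ℝ :=
  (Real.sqrt (2 * Real.pi))⁻¹ * ∫ t in Set.Iic y, Real.exp (-t ^ 2 / 2)

noncomputable def gfun (κ x : ℝ) : ℝ :=
  Phi (Real.sqrt (1 / κ) * (κ - 1) * x) +
    Real.exp (2 * x ^ 2) * Phi (-(Real.sqrt (1 / κ) * (κ + 1) * x))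

open MeasureTheory Set Real Filter

noncomputable def phi (y : ℝ) : ℝ := (Real.sqrt (2 * Real.pi))⁻¹ * Real.exp (-y ^ 2 / 2)

lemma phi_pos (y : ℝ) : 0 < phi y := by
  apply mul_pos (inv_pos.2 (Real.sqrt_pos.2 (by positivity))) (Real.exp_pos _)

lemma integrable_g : Integrable (fun t : ℝ => Real.exp (-t ^ 2 / 2)) := by
  have h : (fun t : ℝ => Real.exp (-t ^ 2 / 2)) = fun t : ℝ => Real.exp (-(1/2 : ℝ) * t ^ 2) := by
    funext t; congr 1; ring
  rw [h]; exact integrable_exp_neg_mul_sq (by norm_num)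

lemma hasDerivAt_Phi (y : ℝ) : HasDerivAt Phi (phi y) y := by
  have hint := integrable_g
  have key : Phi = fun z =>
      (Real.sqrt (2 * Real.pi))⁻¹ * ((∫ t in Iic (0:ℝ), Real.exp (-t ^ 2 / 2)) +
        ∫ t in (0:ℝ)..z, Real.exp (-t ^ 2 / 2)) := by
    funext z
    rw [Phi, ← intervalIntegral.integral_Iic_sub_Iic hint.integrableOn hint.integrableOn]
    ring
  rw [key]
  have hd : HasDerivAt (fun z => ∫ t in (0:ℝ)..z, Real.exp (-t ^ 2 / 2))
      (Real.exp (-y ^ 2 / 2)) y := by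
    apply intervalIntegral.integral_hasDerivAt_right hint.intervalIntegrable
    · exact hint.aestronglyMeasurable.stronglyMeasurableAtFilter
    · exact (Real.continuous_exp.comp (by continuity)).continuousAt
  simpa [phi, mul_comm] using (hd.const_add _).const_mul (Real.sqrt (2 * Real.pi))⁻¹

lemma mills {y : ℝ} (hy : 0 < y) :
    ∫ t in Ioi y, Real.exp (-t ^ 2 / 2) < Real.exp (-y ^ 2 / 2) / y := by
  have hintt : Integrable (fun t : ℝ => t * Real.exp (-t ^ 2 / 2)) := by
    have h : (fun t : ℝ => t * Real.exp (-t ^ 2 / 2))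
        = fun t : ℝ => t * Real.exp (-(1/2 : ℝ) * t ^ 2) := by
      funext t; congr 2; ring
    rw [h]; exact integrable_mul_exp_neg_mul_sq (by norm_num)
  have hA : ∫ t in Ioi y, t * Real.exp (-t ^ 2 / 2) = Real.exp (-y ^ 2 / 2) := by
    have := integral_Ioi_of_hasDerivAt_of_tendsto
      (f := fun t : ℝ => -Real.exp (-t ^ 2 / 2))
      (f' := fun t : ℝ => t * Real.exp (-t ^ 2 / 2)) (a := y) (m := 0)
      (Continuous.continuousWithinAt (by continuity)) ?_ hintt.integrableOn ?_
    · simpa using this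
    · intro x _
      have h1 : HasDerivAt (fun t : ℝ => -t ^ 2 / 2) (-x) x := by
        have h := ((hasDerivAt_pow 2 x).neg).div_const 2
        norm_num at h
        rwa [show -(2 * x) / 2 = -x by ring] at h
      simpa [mul_comm, Pi.neg_def] using ((h1.exp).neg)
    · have : Tendsto (fun t : ℝ => Real.exp (-t ^ 2 / 2)) atTop (nhds 0) := by
        apply Real.tendsto_exp_atBot.comp
        apply Filter.Tendsto.atBot_div_const (by norm_num)
        exact tendsto_neg_atBot_iff.2 (tendsto_pow_atTop (by norm_num))
      simpa using this.neg
  have hD : 0 < ∫ t in Ioi y, (t - y) * Real.exp (-t ^ 2 / 2) := by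
    rw [setIntegral_pos_iff_support_of_nonneg_ae]
    · have hsub : Ioi y ⊆ Function.support (fun t => (t - y) * Real.exp (-t ^ 2 / 2)) ∩ Ioi y := by
        intro t ht
        refine ⟨?_, ht⟩
        have h1 : 0 < t - y := sub_pos.2 ht
        exact ne_of_gt (by positivity)
      refine lt_of_lt_of_le ?_ (measure_mono hsub)
      rw [Real.volume_Ioi]
      exact ENNReal.zero_lt_top
    · filter_upwards [ae_restrict_mem measurableSet_Ioi] with t ht
      have : 0 < t - y := sub_pos.2 ht
      positivity
    · exact (hintt.sub (integrable_g.const_mul y)).integrableOn.congr_fun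
        (by intro t _; simp only [Pi.sub_apply]; ring) measurableSet_Ioi
  have hsplit : ∫ t in Ioi y, (t - y) * Real.exp (-t ^ 2 / 2)
      = (∫ t in Ioi y, t * Real.exp (-t ^ 2 / 2)) - y * ∫ t in Ioi y, Real.exp (-t ^ 2 / 2) := by
    rw [← integral_const_mul, ← integral_sub hintt.integrableOn
      ((integrable_g.const_mul y).integrableOn)]
    congr 1; funext t; ring
  rw [hsplit, hA] at hD
  rw [lt_div_iff₀ hy]
  nlinarith [hD]

lemma Phi_neg_lt {z : ℝ} (hz : 0 < z) : Phi (-z) < phi z / z := by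
  have heq : (∫ t in Iic (-z), Real.exp (-t ^ 2 / 2)) = ∫ t in Ioi z, Real.exp (-t ^ 2 / 2) := by
    have h := integral_comp_neg_Iic (-z) (fun t => Real.exp (-t ^ 2 / 2))
    simp only [neg_sq, neg_neg] at h
    exact h
  have hc : (0 : ℝ) < (Real.sqrt (2 * Real.pi))⁻¹ :=
    inv_pos.2 (Real.sqrt_pos.2 (by positivity))
  rw [Phi, heq]
  have := mills hz
  calc (Real.sqrt (2 * Real.pi))⁻¹ * ∫ t in Ioi z, Real.exp (-t ^ 2 / 2)
      < (Real.sqrt (2 * Real.pi))⁻¹ * (Real.exp (-z ^ 2 / 2) / z) := by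
        exact (mul_lt_mul_iff_right₀ hc).2 this
    _ = phi z / z := by rw [phi]; ring

lemma phi_neg (y : ℝ) : phi (-y) = phi y := by simp [phi]

lemma gfun_hasDerivAt (a b x : ℝ) :
    HasDerivAt (fun x => Phi (a * x) + Real.exp (2 * x ^ 2) * Phi (-(b * x)))
      (a * phi (a * x) + (Real.exp (2 * x ^ 2) * (4 * x) * Phi (-(b * x))
        + Real.exp (2 * x ^ 2) * (phi (-(b * x)) * (-b)))) x := by
  have h1 : HasDerivAt (fun x : ℝ => Phi (a * x)) (a * phi (a * x)) x := by
    have hi : HasDerivAt (fun x : ℝ => a * x) a x := by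
      simpa using (hasDerivAt_id x).const_mul a
    simpa [mul_comm, Function.comp_def] using (hasDerivAt_Phi (a * x)).comp x hi
  have h2 : HasDerivAt (fun x : ℝ => Real.exp (2 * x ^ 2)) (Real.exp (2 * x ^ 2) * (4 * x)) x := by
    have hi : HasDerivAt (fun x : ℝ => 2 * x ^ 2) (4 * x) x := by
      have := (hasDerivAt_pow 2 x).const_mul 2
      norm_num at this
      rwa [show 2 * (2 * x) = 4 * x by ring] at this
    exact hi.exp
  have h3 : HasDerivAt (fun x : ℝ => Phi (-(b * x))) (phi (-(b * x)) * (-b)) x := by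
    have hi : HasDerivAt (fun x : ℝ => -(b * x)) (-b) x := by
      simpa [Pi.neg_def] using ((hasDerivAt_id x).const_mul b).neg
    exact HasDerivAt.comp (h₂ := Phi) (h := fun x : ℝ => -(b * x)) x (hasDerivAt_Phi (-(b * x))) hi
  exact h1.add (h2.mul h3)

theorem stmt4 (κ : ℝ) (hκ0 : 0 < κ) (hκ1 : κ ≤ 1) :
    StrictAntiOn (gfun κ) (Set.Ioi 0) := by
  set s := Real.sqrt (1 / κ) with hsdef
  have hs0 : 0 < s := Real.sqrt_pos.2 (by positivity)
  have hs2 : s ^ 2 * κ = 1 := by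
    rw [hsdef, Real.sq_sqrt (by positivity : (0:ℝ) ≤ 1/κ)]
    field_simp
  set a := s * (κ - 1) with hadef
  set b := s * (κ + 1) with hbdef
  have hb0 : 0 < b := mul_pos hs0 (by linarith)
  have hgfun : gfun κ = fun x => Phi (a * x) + Real.exp (2 * x ^ 2) * Phi (-(b * x)) := rfl
  have hgd : ∀ x : ℝ, HasDerivAt (gfun κ)
      (a * phi (a * x) + (Real.exp (2 * x ^ 2) * (4 * x) * Phi (-(b * x))
        + Real.exp (2 * x ^ 2) * (phi (-(b * x)) * (-b)))) x := by
    intro x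
    rw [hgfun]
    exact gfun_hasDerivAt a b x
  apply strictAntiOn_of_deriv_neg (convex_Ioi 0)
  · exact fun x _ => (hgd x).differentiableAt.continuousAt.continuousWithinAt
  · intro x hx
    rw [interior_Ioi] at hx
    rw [(hgd x).deriv]
    have hx0 : 0 < x := hx
    have hb2 : b ^ 2 - a ^ 2 = 4 := by
      rw [hadef, hbdef]
      linear_combination 4 * hs2
    have hkey : Real.exp (2 * x ^ 2) * phi (b * x) = phi (a * x) := by
      rw [phi, phi, mul_left_comm, ← Real.exp_add]
      congr 2
      linear_combination (-(x ^ 2) / 2) * hb2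
    have hbx : 0 < b * x := mul_pos hb0 hx0
    have hmills := Phi_neg_lt hbx
    have hcoef : 4 / b ≤ 2 * s := by
      rw [div_le_iff₀ hb0, hbdef]
      nlinarith [hs2, mul_le_mul_of_nonneg_left hκ1 (sq_nonneg s)]
    have hphia : 0 < phi (a * x) := phi_pos _
    have hstep : Real.exp (2 * x ^ 2) * (4 * x) * Phi (-(b * x))
        < (4 / b) * phi (a * x) := by
      have h1 : Real.exp (2 * x ^ 2) * (4 * x) * Phi (-(b * x))
          < Real.exp (2 * x ^ 2) * (4 * x) * (phi (b * x) / (b * x)) := by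
        apply mul_lt_mul_of_pos_left hmills
        positivity
      have h2 : Real.exp (2 * x ^ 2) * (4 * x) * (phi (b * x) / (b * x))
          = (4 / b) * (Real.exp (2 * x ^ 2) * phi (b * x)) := by
        field_simp
      rw [h2, hkey] at h1
      exact h1
    have hab : a - b = -(2 * s) := by rw [hadef, hbdef]; ring
    have hlast : Real.exp (2 * x ^ 2) * (phi (-(b * x)) * (-b)) = -b * phi (a * x) := by
      rw [phi_neg, ← hkey]; ring
    rw [hlast]
    nlinarith [hstep, hcoef, hphia, mul_le_mul_of_nonneg_right hcoef hphia.le]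
end

section
/- For 0 < κ < 1, the infimum over x ∈ (0,∞) of g_κ(x) = Φ(√(1/κ)(κ−1)x) + e^{2x²}·Φ(−√(1/κ)(κ+1)x) equals 0, and this infimum equals the limit of g_κ(x) as x → ∞. -/
open Real MeasureTheory Set Filter

lemma gauss_int : MeasureTheory.Integrable (fun x : ℝ => Real.exp (-x ^ 2 / 2)) := by
  have h := integrable_exp_neg_mul_sq (show (0:ℝ) < 1/2 by norm_num)
  refine h.congr ?_
  filter_upwards with x
  ring_nf

lemma tail_bound {z : ℝ} (hz : 0 < z) :
    (∫ t in Set.Iic (-z), Real.exp (-t ^ 2 / 2)) ≤ Real.exp (-z ^ 2 / 2) / z := by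
  have h1 : (∫ t in Set.Iic (-z), Real.exp (-t ^ 2 / 2))
      = ∫ x in Set.Ioi z, Real.exp (-x ^ 2 / 2) := by
    rw [← integral_comp_neg_Ioi z (fun t => Real.exp (-t ^ 2 / 2))]
    simp [neg_sq]
  rw [h1]
  have h2 : (∫ x in Set.Ioi z, Real.exp (-x ^ 2 / 2))
      ≤ ∫ x in Set.Ioi z, Real.exp (z ^ 2 / 2) * Real.exp (-z * x) := by
    have hInt2 : MeasureTheory.IntegrableOn
        (fun x : ℝ => Real.exp (z ^ 2 / 2) * Real.exp (-z * x))
        (Set.Ioi z) := (exp_neg_integrableOn_Ioi z hz).const_mul _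
    refine MeasureTheory.setIntegral_mono_on gauss_int.integrableOn hInt2
      measurableSet_Ioi ?_
    intro x _
    rw [← Real.exp_add]
    apply Real.exp_le_exp.2
    nlinarith [sq_nonneg (x - z)]
  refine h2.trans ?_
  rw [MeasureTheory.integral_const_mul]
  have h3 : (∫ x in Set.Ioi z, Real.exp (-z * x)) = z⁻¹ * Real.exp (-z * z) := by
    simp_rw [neg_mul]
    rw [MeasureTheory.integral_comp_mul_left_Ioi (fun x => Real.exp (-x)) z hz,
      smul_eq_mul, integral_exp_neg_Ioi]
  refine le_of_eq ?_
  rw [h3, show Real.exp (z ^ 2 / 2) * (z⁻¹ * Real.exp (-z * z))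
      = Real.exp (z ^ 2 / 2 + -z * z) * z⁻¹ by rw [Real.exp_add]; ring,
    ← div_eq_mul_inv]
  congr 2
  ring

lemma Phi_nonneg (y : ℝ) : 0 ≤ Phi y := by
  apply mul_nonneg (inv_nonneg.2 (Real.sqrt_nonneg _))
  exact MeasureTheory.setIntegral_nonneg measurableSet_Iic fun t _ => (Real.exp_pos _).le

lemma Phi_neg_le {z : ℝ} (hz : 0 < z) :
    Phi (-z) ≤ (Real.sqrt (2 * Real.pi))⁻¹ * (Real.exp (-z ^ 2 / 2) / z) := by
  exact mul_le_mul_of_nonneg_left (tail_bound hz) (inv_nonneg.2 (Real.sqrt_nonneg _))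

lemma aux_tendsto {d c : ℝ} (hd : 0 < d) (hc : 0 < c) :
    Filter.Tendsto (fun x : ℝ => Real.exp (-d * x ^ 2) / (c * x)) Filter.atTop (nhds 0) := by
  have h1 : Filter.Tendsto (fun x : ℝ => (c * x)⁻¹) Filter.atTop (nhds 0) :=
    Filter.Tendsto.inv_tendsto_atTop (Filter.tendsto_id.const_mul_atTop hc)
  refine squeeze_zero' ?_ ?_ h1
  · filter_upwards [Filter.eventually_gt_atTop 0] with x hx
    positivity
  · filter_upwards [Filter.eventually_gt_atTop 0] with x hx
    rw [div_eq_mul_inv]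
    have : Real.exp (-d * x ^ 2) ≤ 1 := by
      rw [← Real.exp_zero]
      apply Real.exp_le_exp.2
      nlinarith
    calc Real.exp (-d * x ^ 2) * (c * x)⁻¹ ≤ 1 * (c * x)⁻¹ := by
          apply mul_le_mul_of_nonneg_right this
          positivity
      _ = (c * x)⁻¹ := one_mul _

theorem stmt5 (κ : ℝ) (hκ0 : 0 < κ) (hκ1 : κ < 1) :
    sInf (gfun κ '' Set.Ioi 0) = 0 ∧
      Filter.Tendsto (gfun κ) Filter.atTop (nhds 0) := by
  set c1 : ℝ := Real.sqrt (1 / κ) * (1 - κ) with hc1def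
  set c2 : ℝ := Real.sqrt (1 / κ) * (κ + 1) with hc2def
  have hs : 0 < Real.sqrt (1 / κ) := Real.sqrt_pos.2 (by positivity)
  have hs2 : Real.sqrt (1 / κ) ^ 2 = 1 / κ := Real.sq_sqrt (by positivity)
  have hc1 : 0 < c1 := mul_pos hs (by linarith)
  have hc2 : 0 < c2 := mul_pos hs (by linarith)
  have hd2 : 0 < c2 ^ 2 / 2 - 2 := by
    have : c2 ^ 2 = (κ + 1) ^ 2 / κ := by
      rw [hc2def, mul_pow, hs2]; ring
    rw [this]
    rw [lt_sub_iff_add_lt, zero_add, lt_div_iff₀ (by norm_num : (0:ℝ) < 2),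
      lt_div_iff₀ hκ0] at *
    nlinarith [sq_nonneg (κ - 1)]
  -- key pointwise bound
  have key : ∀ x : ℝ, 0 < x → gfun κ x ≤
      (Real.sqrt (2 * Real.pi))⁻¹ * (Real.exp (-(c1 ^ 2 / 2) * x ^ 2) / (c1 * x))
      + (Real.sqrt (2 * Real.pi))⁻¹ *
        (Real.exp (-(c2 ^ 2 / 2 - 2) * x ^ 2) / (c2 * x)) := by
    intro x hx
    have hfirst : Phi (Real.sqrt (1 / κ) * (κ - 1) * x) ≤
        (Real.sqrt (2 * Real.pi))⁻¹ * (Real.exp (-(c1 ^ 2 / 2) * x ^ 2) / (c1 * x)) := by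
      have heq : Real.sqrt (1 / κ) * (κ - 1) * x = -(c1 * x) := by
        rw [hc1def]; ring
      rw [heq]
      have := Phi_neg_le (mul_pos hc1 hx)
      refine this.trans (le_of_eq ?_)
      congr 2
      ring
    have hsecond : Real.exp (2 * x ^ 2) * Phi (-(Real.sqrt (1 / κ) * (κ + 1) * x)) ≤
        (Real.sqrt (2 * Real.pi))⁻¹ *
          (Real.exp (-(c2 ^ 2 / 2 - 2) * x ^ 2) / (c2 * x)) := by
      have heq : Real.sqrt (1 / κ) * (κ + 1) * x = c2 * x := by rw [hc2def]
      rw [heq]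
      have hb := Phi_neg_le (mul_pos hc2 hx)
      have := mul_le_mul_of_nonneg_left hb (Real.exp_pos (2 * x ^ 2)).le
      refine this.trans (le_of_eq ?_)
      rw [show Real.exp (2 * x ^ 2) * ((Real.sqrt (2 * Real.pi))⁻¹ *
          (Real.exp (-(c2 * x) ^ 2 / 2) / (c2 * x)))
        = (Real.sqrt (2 * Real.pi))⁻¹ *
          ((Real.exp (2 * x ^ 2) * Real.exp (-(c2 * x) ^ 2 / 2)) / (c2 * x)) by ring,
        ← Real.exp_add]
      congr 3
      ring
    exact add_le_add hfirst hsecond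
  have hub : Filter.Tendsto (fun x : ℝ =>
      (Real.sqrt (2 * Real.pi))⁻¹ * (Real.exp (-(c1 ^ 2 / 2) * x ^ 2) / (c1 * x))
      + (Real.sqrt (2 * Real.pi))⁻¹ *
        (Real.exp (-(c2 ^ 2 / 2 - 2) * x ^ 2) / (c2 * x))) Filter.atTop (nhds 0) := by
    have t1 := (aux_tendsto (show (0:ℝ) < c1 ^ 2 / 2 by positivity) hc1).const_mul
      (Real.sqrt (2 * Real.pi))⁻¹
    have t2 := (aux_tendsto hd2 hc2).const_mul (Real.sqrt (2 * Real.pi))⁻¹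
    simpa using t1.add t2
  have hgnonneg : ∀ x : ℝ, 0 ≤ gfun κ x := by
    intro x
    unfold gfun
    have := Phi_nonneg (Real.sqrt (1 / κ) * (κ - 1) * x)
    have := Phi_nonneg (-(Real.sqrt (1 / κ) * (κ + 1) * x))
    positivity
  have htend : Filter.Tendsto (gfun κ) Filter.atTop (nhds 0) := by
    refine squeeze_zero' ?_ ?_ hub
    · filter_upwards with x using hgnonneg x
    · filter_upwards [Filter.eventually_gt_atTop 0] with x hx using key x hx
  refine ⟨?_, htend⟩
  have hne : (gfun κ '' Set.Ioi 0).Nonempty := ⟨gfun κ 1, ⟨1, by norm_num, rfl⟩⟩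
  have hbdd : BddBelow (gfun κ '' Set.Ioi 0) := ⟨0, by
    rintro y ⟨x, -, rfl⟩; exact hgnonneg x⟩
  refine le_antisymm ?_ ?_
  · refine ge_of_tendsto htend ?_
    filter_upwards [Filter.eventually_gt_atTop 0] with x hx
    exact csInf_le hbdd ⟨x, hx, rfl⟩
  · exact le_csInf hne (by rintro y ⟨x, -, rfl⟩; exact hgnonneg x)
end
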